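/- Let K be an origin-symmetric convex body in ℝⁿ and α > 1/2, and suppose K̄_α is a position of K in α-regular P-typical position with constants (P̄_α, c), where P̄_α ≤ C/√(α − 1/2). Then for every integer k with 1 ≤ k ≤ n/2, when (F,E) is drawn from the Haar probability measure on the flag manifold G^k: d_G((P_F K̄_α) ∩ E, B₂^E) ≤ C′ (2α − 1)^{−1} (n/k)^{2α} with probability at least 1 − 2exp(−ck), and d_G(P_E(K̄_α ∩ F), B₂^E) ≤ C′ (2α − 1)^{−1} (n/k)^{2α} with probability at least 1 − 2exp(−ck). -/

import Mathlib

open MeasureTheory Metric Set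
open scoped ENNReal Pointwise

noncomputable section

abbrev Euc (n : ℕ) : Type := EuclideanSpace ℝ (Fin n)

def projCLM {n : ℕ} (F : Submodule ℝ (Euc n)) : Euc n →L[ℝ] Euc n :=
  F.subtypeL.comp F.orthogonalProjection

instance {n : ℕ} : MeasurableSpace (Submodule ℝ (Euc n)) :=
  MeasurableSpace.comap (projCLM (n := n)) (borel (Euc n →L[ℝ] Euc n))

def IsHaarGrassmannian (n m : ℕ) (σ : Measure (Submodule ℝ (Euc n))) : Prop :=
  IsProbabilityMeasure σ ∧
  σ {F : Submodule ℝ (Euc n) | Module.finrank ℝ F = m} = 1 ∧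
  ∀ g : Euc n ≃ₗᵢ[ℝ] Euc n,
    Measure.map (fun F : Submodule ℝ (Euc n) =>
      F.map (g.toLinearEquiv : Euc n →ₗ[ℝ] Euc n)) σ = σ

/-- The Haar probability measure on the flag manifold
`G^k = {(F,E) : dim F = n-k+1, dim E = n-2k+2, E ⊆ F}`: an `O(n)`-invariant
probability measure concentrated on the flag manifold. -/
def IsHaarFlag (n k : ℕ)
    (μ : Measure (Submodule ℝ (Euc n) × Submodule ℝ (Euc n))) : Prop :=
  IsProbabilityMeasure μ ∧
  μ {p : Submodule ℝ (Euc n) × Submodule ℝ (Euc n) |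
      Module.finrank ℝ p.1 = n - k + 1 ∧ Module.finrank ℝ p.2 = n - 2 * k + 2 ∧ p.2 ≤ p.1} = 1 ∧
  ∀ g : Euc n ≃ₗᵢ[ℝ] Euc n,
    Measure.map (fun p : Submodule ℝ (Euc n) × Submodule ℝ (Euc n) =>
      (p.1.map (g.toLinearEquiv : Euc n →ₗ[ℝ] Euc n),
       p.2.map (g.toLinearEquiv : Euc n →ₗ[ℝ] Euc n))) μ = μ

def IsSymmConvexBody {n : ℕ} (K : Set (Euc n)) : Prop :=
  IsCompact K ∧ Convex ℝ K ∧ (interior K).Nonempty ∧ K = -K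

def polarBody {n : ℕ} (K : Set (Euc n)) : Set (Euc n) :=
  {y | ∀ x ∈ K, |(inner ℝ x y : ℝ)| ≤ 1}

def PTypicalPosition (n : ℕ) (α Pbar c : ℝ) (K : Set (Euc n)) : Prop :=
  ∀ k : ℕ, 1 ≤ k → k ≤ n →
    ∀ σ : Measure (Submodule ℝ (Euc n)), IsHaarGrassmannian n (n - k + 1) σ →
      ∀ L ∈ ({K, polarBody K} : Set (Set (Euc n))),
        σ {F : Submodule ℝ (Euc n) |
            Pbar * ((n : ℝ) / (k : ℝ)) ^ α < Metric.diam (L ∩ (F : Set (Euc n)))}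
          ≤ ENNReal.ofReal (Real.exp (-(c * k)))

/-- Geometric (Banach–Mazur type) distance between two origin-symmetric convex
bodies with the same linear hull: `inf {a b > 0 : b⁻¹ L ⊆ K ⊆ a L}`. -/
def geomDist {n : ℕ} (K L : Set (Euc n)) : ℝ :=
  sInf {d : ℝ | ∃ a b : ℝ, 0 < a ∧ 0 < b ∧ d = a * b ∧ b⁻¹ • L ⊆ K ∧ K ⊆ a • L}

/-- The Euclidean unit ball of a subspace `E`. -/
def ballIn {n : ℕ} (E : Submodule ℝ (Euc n)) : Set (Euc n) :=
  (E : Set (Euc n)) ∩ Metric.closedBall 0 1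


section Aux

open Filter Bornology
open scoped Topology

variable {n : ℕ}

local instance : MeasurableSpace (Euc n →L[ℝ] Euc n) := borel _
local instance : BorelSpace (Euc n →L[ℝ] Euc n) := ⟨rfl⟩

lemma projCLM_apply (F : Submodule ℝ (Euc n)) (x : Euc n) :
    projCLM F x = (F.orthogonalProjection x : Euc n) := rfl

lemma projCLM_mem (F : Submodule ℝ (Euc n)) (x : Euc n) : projCLM F x ∈ F :=
  (F.orthogonalProjection x).2

lemma sub_projCLM_mem (F : Submodule ℝ (Euc n)) (x : Euc n) : x - projCLM F x ∈ Fᗮ :=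
  F.sub_starProjection_mem_orthogonal x

lemma projCLM_eq_self {F : Submodule ℝ (Euc n)} {x : Euc n} (hx : x ∈ F) : projCLM F x = x := by
  have := Submodule.orthogonalProjectionOnto_mem_subspace_eq_self (K := F) ⟨x, hx⟩
  simpa [projCLM_apply] using congrArg Subtype.val this

lemma projCLM_eq_zero {F : Submodule ℝ (Euc n)} {x : Euc n} (hx : x ∈ Fᗮ) : projCLM F x = 0 := by
  have := Submodule.orthogonalProjectionOnto_apply_of_mem_orthogonal (K := F) hx
  simpa [projCLM_apply] using congrArg Subtype.val this

lemma inner_projCLM (F : Submodule ℝ (Euc n)) (x y : Euc n) :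
    (inner ℝ (projCLM F x) y : ℝ) = inner ℝ x (projCLM F y) :=
  F.inner_starProjection_left_eq_right x y

lemma norm_sq_projCLM (F : Submodule ℝ (Euc n)) (x : Euc n) :
    ‖x‖ ^ 2 = ‖projCLM F x‖ ^ 2 + ‖x - projCLM F x‖ ^ 2 := by
  have h0 : (inner ℝ (projCLM F x) (x - projCLM F x) : ℝ) = 0 :=
    (Submodule.mem_orthogonal F (x - projCLM F x)).1 (sub_projCLM_mem F x) _ (projCLM_mem F x)
  have hsum : projCLM F x + (x - projCLM F x) = x := by abel
  calc ‖x‖ ^ 2 = ‖projCLM F x + (x - projCLM F x)‖ ^ 2 := by rw [hsum]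
    _ = ‖projCLM F x‖ ^ 2 + ‖x - projCLM F x‖ ^ 2 := by
        rw [norm_add_sq_real, h0]; ring

lemma norm_projCLM_le (F : Submodule ℝ (Euc n)) (x : Euc n) : ‖projCLM F x‖ ≤ ‖x‖ := by
  have h := norm_sq_projCLM F x
  nlinarith [norm_nonneg (projCLM F x), norm_nonneg x, sq_nonneg ‖x - projCLM F x‖]

lemma projCLM_eq_of_norm_eq {F : Submodule ℝ (Euc n)} {x : Euc n}
    (h : ‖projCLM F x‖ = ‖x‖) : projCLM F x = x := by
  have h2 := norm_sq_projCLM F x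
  have h4 : ‖x - projCLM F x‖ ^ 2 = 0 := by rw [h] at h2; linarith
  have h3 : ‖x - projCLM F x‖ = 0 := by
    have := pow_eq_zero_iff (two_ne_zero) |>.1 h4
    exact this
  have := norm_eq_zero.1 h3
  have := sub_eq_zero.1 this
  exact this.symm

lemma measurable_projCLM : Measurable (projCLM (n := n)) := fun _ hs => ⟨_, hs, rfl⟩

lemma measurable_to_submodule {β : Type*} [MeasurableSpace β] {f : β → Submodule ℝ (Euc n)}
    (h : Measurable fun b => projCLM (f b)) : Measurable f := by
  intro t ht
  obtain ⟨s, hs, rfl⟩ := ht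
  exact h hs


lemma tendsto_altproj (U V : Submodule ℝ (Euc n)) :
    Filter.Tendsto (fun m : ℕ => (projCLM U * projCLM V) ^ m) Filter.atTop
      (𝓝 (projCLM (U ⊓ V))) := by
  set A := projCLM U with hA
  set B := projCLM V with hB
  set W := U ⊓ V with hW
  set C := projCLM W with hC
  obtain ⟨q, hq0, hq1, hq⟩ :
      ∃ q : ℝ, 0 ≤ q ∧ q < 1 ∧ ∀ y ∈ Wᗮ, ‖A (B y)‖ ≤ q * ‖y‖ := by
    by_cases hS : ∃ y₀ : Euc n, y₀ ∈ Wᗮ ∧ ‖y₀‖ = 1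
    · set S : Set (Euc n) := (Wᗮ : Set (Euc n)) ∩ Metric.sphere 0 1 with hSdef
      have hScomp : IsCompact S :=
        (isCompact_sphere (0 : Euc n) 1).inter_left Wᗮ.closed_of_finiteDimensional
      have hSne : S.Nonempty := ⟨hS.choose, hS.choose_spec.1, by
        simp [mem_sphere_iff_norm, hS.choose_spec.2]⟩
      obtain ⟨y₀, hy₀S, hy₀max⟩ := hScomp.exists_isMaxOn hSne
        ((A.continuous.comp B.continuous).norm.continuousOn)
      refine ⟨‖A (B y₀)‖, norm_nonneg _, ?_, ?_⟩
      · rcases lt_or_ge ‖A (B y₀)‖ 1 with h | h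
        · exact h
        · exfalso
          have hy₀n : ‖y₀‖ = 1 := by simpa [mem_sphere_iff_norm] using hy₀S.2
          have hle1 : ‖A (B y₀)‖ ≤ ‖B y₀‖ := norm_projCLM_le U _
          have hle2 : ‖B y₀‖ ≤ ‖y₀‖ := norm_projCLM_le V _
          have he1 : ‖B y₀‖ = ‖y₀‖ := le_antisymm hle2 (by rw [hy₀n]; linarith)
          have hBy : B y₀ = y₀ := projCLM_eq_of_norm_eq (F := V) he1
          have he2 : ‖A y₀‖ = ‖y₀‖ := by
            refine le_antisymm (norm_projCLM_le U _) ?_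
            rw [hy₀n]; rw [hBy] at h; exact h
          have hAy : A y₀ = y₀ := projCLM_eq_of_norm_eq (F := U) he2
          have hyW : y₀ ∈ W := by
            rw [hW, Submodule.mem_inf]
            constructor
            · rw [← hAy]; exact projCLM_mem U y₀
            · rw [← hBy]; exact projCLM_mem V y₀
          have h0 : (inner ℝ y₀ y₀ : ℝ) = 0 :=
            (Submodule.mem_orthogonal W y₀).1 hy₀S.1 y₀ hyW
          have hzero : y₀ = 0 := inner_self_eq_zero.1 h0
          rw [hzero, norm_zero] at hy₀n; norm_num at hy₀n
      · intro y hy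
        rcases eq_or_ne y 0 with rfl | hyne
        · simp
        · have hyu : (‖y‖⁻¹ • y) ∈ S := by
            refine ⟨Wᗮ.smul_mem _ hy, ?_⟩
            simp [mem_sphere_iff_norm, norm_smul, abs_of_nonneg, inv_mul_cancel₀,
              norm_ne_zero_iff.2 hyne]
          have hmax := isMaxOn_iff.1 hy₀max _ hyu
          simp only [Function.comp_apply] at hmax
          have hsm : A (B (‖y‖⁻¹ • y)) = ‖y‖⁻¹ • A (B y) := by
            rw [_root_.map_smul, _root_.map_smul]
          rw [hsm, norm_smul, norm_inv, norm_norm] at hmax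
          have hyn : 0 < ‖y‖ := norm_pos_iff.2 hyne
          calc ‖A (B y)‖ = ‖y‖ * (‖y‖⁻¹ * ‖A (B y)‖) := by field_simp
            _ ≤ ‖y‖ * ‖A (B y₀)‖ := by
                apply mul_le_mul_of_nonneg_left hmax hyn.le
            _ = ‖A (B y₀)‖ * ‖y‖ := mul_comm _ _
    · refine ⟨0, le_rfl, one_pos, fun y hy => ?_⟩
      have hy0 : y = 0 := by
        by_contra hne
        exact hS ⟨‖y‖⁻¹ • y, Wᗮ.smul_mem _ hy, by
          simp [norm_smul, abs_of_nonneg, inv_mul_cancel₀, norm_ne_zero_iff.2 hne]⟩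
      simp [hy0]
  have hfixW : ∀ z ∈ W, A z = z ∧ B z = z := by
    intro z hz
    rw [hW, Submodule.mem_inf] at hz
    exact ⟨projCLM_eq_self hz.1, projCLM_eq_self hz.2⟩
  have hinv : ∀ y ∈ Wᗮ, A (B y) ∈ Wᗮ := by
    intro y hy
    rw [Submodule.mem_orthogonal]
    intro z hz
    have h1 : (inner ℝ z (A (B y)) : ℝ) = inner ℝ (A z) (B y) := by
      rw [hA, inner_projCLM]
    rw [h1, (hfixW z hz).1]
    have h2 : (inner ℝ z (B y) : ℝ) = inner ℝ (B z) y := by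
      rw [hB, inner_projCLM]
    rw [h2, (hfixW z hz).2]
    exact (Submodule.mem_orthogonal W y).1 hy z hz
  have hiter : ∀ m : ℕ, ∀ y ∈ Wᗮ, ((A * B) ^ m) y ∈ Wᗮ ∧ ‖((A * B) ^ m) y‖ ≤ q ^ m * ‖y‖ := by
    intro m
    induction m with
    | zero => intro y hy; simp only [pow_zero, ContinuousLinearMap.one_apply]
              exact ⟨hy, by simp⟩
    | succ m ih =>
      intro y hy
      have hstep : ((A * B) ^ (m + 1)) y = ((A * B) ^ m) (A (B y)) := by
        rw [pow_succ, ContinuousLinearMap.mul_apply, ContinuousLinearMap.mul_apply]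
      obtain ⟨hmem, hnorm⟩ := ih (A (B y)) (hinv y hy)
      refine ⟨by rw [hstep]; exact hmem, ?_⟩
      rw [hstep]
      calc ‖((A * B) ^ m) (A (B y))‖ ≤ q ^ m * ‖A (B y)‖ := hnorm
        _ ≤ q ^ m * (q * ‖y‖) :=
            mul_le_mul_of_nonneg_left (hq y hy) (pow_nonneg hq0 m)
        _ = q ^ (m + 1) * ‖y‖ := by ring
  have hfixpow : ∀ m : ℕ, ∀ z ∈ W, ((A * B) ^ m) z = z := by
    intro m
    induction m with
    | zero => intro z _; simp
    | succ m ih =>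
      intro z hz
      rw [pow_succ', ContinuousLinearMap.mul_apply, ContinuousLinearMap.mul_apply,
        ih z hz, (hfixW z hz).2, (hfixW z hz).1]
  have hbound : ∀ m : ℕ, ‖(A * B) ^ m - C‖ ≤ 2 * q ^ m := by
    intro m
    apply ContinuousLinearMap.opNorm_le_bound _ (by positivity)
    intro x
    have hxd : x - C x ∈ Wᗮ := sub_projCLM_mem W x
    have hCx : C x ∈ W := projCLM_mem W x
    have h1 : ((A * B) ^ m) x = C x + ((A * B) ^ m) (x - C x) := by
      rw [map_sub, hfixpow m (C x) hCx]
      abel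
    rw [ContinuousLinearMap.sub_apply, h1, add_sub_cancel_left]
    calc ‖((A * B) ^ m) (x - C x)‖ ≤ q ^ m * ‖x - C x‖ := (hiter m _ hxd).2
      _ ≤ q ^ m * (‖x‖ + ‖C x‖) := by
          apply mul_le_mul_of_nonneg_left (norm_sub_le x (C x)) (pow_nonneg hq0 m)
      _ ≤ q ^ m * (‖x‖ + ‖x‖) := by
          have := norm_projCLM_le W x
          have := pow_nonneg hq0 m
          nlinarith
      _ = 2 * q ^ m * ‖x‖ := by ring
  have hten : Filter.Tendsto (fun m : ℕ => ‖(A * B) ^ m - C‖) Filter.atTop (𝓝 0) := by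
    have h2 : Filter.Tendsto (fun m : ℕ => 2 * q ^ m) Filter.atTop (𝓝 0) := by
      have := (tendsto_pow_atTop_nhds_zero_of_lt_one hq0 hq1).const_mul (2 : ℝ)
      simpa using this
    exact squeeze_zero (fun m => norm_nonneg _) hbound h2
  rw [tendsto_iff_norm_sub_tendsto_zero]
  exact hten

lemma projCLM_orthogonal (F : Submodule ℝ (Euc n)) : projCLM Fᗮ = 1 - projCLM F := by
  refine ContinuousLinearMap.ext fun x => ?_
  have h := Submodule.starProjection_add_starProjection_orthogonal (K := F) x
  simp only [ContinuousLinearMap.sub_apply, ContinuousLinearMap.one_apply, projCLM_apply]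
  rw [eq_sub_iff_add_eq']
  exact h

set_option maxHeartbeats 1000000 in
lemma measurable_hmap :
    Measurable (fun p : Submodule ℝ (Euc n) × Submodule ℝ (Euc n) => p.2 ⊔ p.1ᗮ) := by
  apply measurable_to_submodule
  have hmeas : ∀ m : ℕ, Measurable (fun p : Submodule ℝ (Euc n) × Submodule ℝ (Euc n) =>
      (1 : Euc n →L[ℝ] Euc n) - ((1 - projCLM p.2) * projCLM p.1) ^ m) := by
    intro m
    have hc : Continuous (fun T : (Euc n →L[ℝ] Euc n) × (Euc n →L[ℝ] Euc n) =>
        (1 : Euc n →L[ℝ] Euc n) - ((1 - T.2) * T.1) ^ m) :=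
      continuous_const.sub (((continuous_const.sub continuous_snd).mul continuous_fst).pow m)
    have hp : Measurable (fun p : Submodule ℝ (Euc n) × Submodule ℝ (Euc n) =>
        (projCLM p.1, projCLM p.2)) :=
      (measurable_projCLM.comp measurable_fst).prodMk (measurable_projCLM.comp measurable_snd)
    exact Measurable.comp (g := fun T : (Euc n →L[ℝ] Euc n) × (Euc n →L[ℝ] Euc n) =>
        (1 : Euc n →L[ℝ] Euc n) - ((1 - T.2) * T.1) ^ m)
      (f := fun p : Submodule ℝ (Euc n) × Submodule ℝ (Euc n) => (projCLM p.1, projCLM p.2))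
      hc.measurable hp
  apply measurable_of_tendsto_metrizable' Filter.atTop hmeas
  rw [tendsto_pi_nhds]
  intro p
  have hW : (p.2 ⊔ p.1ᗮ)ᗮ = p.2ᗮ ⊓ p.1 := by
    rw [← Submodule.inf_orthogonal, Submodule.orthogonal_orthogonal]
  have htarget : projCLM (p.2 ⊔ p.1ᗮ) = 1 - projCLM (p.2ᗮ ⊓ p.1) := by
    have h1 := projCLM_orthogonal (p.2 ⊔ p.1ᗮ)
    rw [hW] at h1
    rw [h1, sub_sub_cancel]
  rw [htarget]
  have h2 : (fun m : ℕ => (1 : Euc n →L[ℝ] Euc n) - ((1 - projCLM p.2) * projCLM p.1) ^ m)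
      = fun m : ℕ => (1 : Euc n →L[ℝ] Euc n) - (projCLM p.2ᗮ * projCLM p.1) ^ m := by
    rw [projCLM_orthogonal]
  rw [h2]
  exact (tendsto_altproj p.2ᗮ p.1).const_sub 1



lemma projCLM_map_isometry (g : Euc n ≃ₗᵢ[ℝ] Euc n) (F : Submodule ℝ (Euc n)) :
    projCLM (F.map (g.toLinearEquiv : Euc n →ₗ[ℝ] Euc n)) =
      g.toLinearIsometry.toContinuousLinearMap *
        (projCLM F * g.symm.toLinearIsometry.toContinuousLinearMap) := by
  refine ContinuousLinearMap.ext fun x => ?_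
  simp only [ContinuousLinearMap.mul_apply, projCLM_apply,
    LinearIsometry.coe_toContinuousLinearMap, LinearIsometryEquiv.coe_toLinearIsometry]
  exact Submodule.starProjection_map_apply g F x

lemma measurable_mapg (g : Euc n ≃ₗᵢ[ℝ] Euc n) :
    Measurable (fun F : Submodule ℝ (Euc n) =>
      F.map (g.toLinearEquiv : Euc n →ₗ[ℝ] Euc n)) := by
  apply measurable_to_submodule
  have hc : Continuous (fun T : Euc n →L[ℝ] Euc n =>
      g.toLinearIsometry.toContinuousLinearMap *
        (T * g.symm.toLinearIsometry.toContinuousLinearMap)) :=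
    continuous_const.mul (continuous_id.mul continuous_const)
  have h2 : (fun F : Submodule ℝ (Euc n) =>
      projCLM (F.map (g.toLinearEquiv : Euc n →ₗ[ℝ] Euc n)))
      = (fun T : Euc n →L[ℝ] Euc n =>
          g.toLinearIsometry.toContinuousLinearMap *
            (T * g.symm.toLinearIsometry.toContinuousLinearMap)) ∘ projCLM (n := n) :=
    funext fun F => projCLM_map_isometry g F
  rw [h2]
  exact Measurable.comp (f := projCLM (n := n)) hc.measurable measurable_projCLM

lemma measurable_pairg (g : Euc n ≃ₗᵢ[ℝ] Euc n) :
    Measurable (fun p : Submodule ℝ (Euc n) × Submodule ℝ (Euc n) =>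
      (p.1.map (g.toLinearEquiv : Euc n →ₗ[ℝ] Euc n),
       p.2.map (g.toLinearEquiv : Euc n →ₗ[ℝ] Euc n))) :=
  ((measurable_mapg g).comp measurable_fst).prodMk ((measurable_mapg g).comp measurable_snd)

lemma orthogonal_map_isometry (g : Euc n ≃ₗᵢ[ℝ] Euc n) (F : Submodule ℝ (Euc n)) :
    (F.map (g.toLinearEquiv : Euc n →ₗ[ℝ] Euc n))ᗮ
      = Fᗮ.map (g.toLinearEquiv : Euc n →ₗ[ℝ] Euc n) := by
  ext x
  simp only [Submodule.mem_orthogonal, Submodule.mem_map,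
    LinearEquiv.coe_coe, LinearIsometryEquiv.coe_toLinearEquiv]
  constructor
  · intro h
    refine ⟨g.symm x, fun u hu => ?_, by simp⟩
    have h2 := h (g u) ⟨u, hu, rfl⟩
    have h3 : (inner ℝ u (g.symm x) : ℝ) = inner ℝ (g u) (g (g.symm x)) :=
      (g.inner_map_map u (g.symm x)).symm
    rw [h3, g.apply_symm_apply]
    exact h2
  · rintro ⟨y, hy, rfl⟩ u ⟨w, hw, rfl⟩
    have h3 : (inner ℝ (g w) (g y) : ℝ) = inner ℝ w y := g.inner_map_map w y
    rw [h3]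
    exact hy w hw

lemma isHaarGrassmannian_marginal {k : ℕ}
    {μ : Measure (Submodule ℝ (Euc n) × Submodule ℝ (Euc n))} (hμ : IsHaarFlag n k μ)
    {f : Submodule ℝ (Euc n) × Submodule ℝ (Euc n) → Submodule ℝ (Euc n)} (hf : Measurable f)
    (hcomm : ∀ (g : Euc n ≃ₗᵢ[ℝ] Euc n) p,
      f (p.1.map (g.toLinearEquiv : Euc n →ₗ[ℝ] Euc n),
         p.2.map (g.toLinearEquiv : Euc n →ₗ[ℝ] Euc n))
        = (f p).map (g.toLinearEquiv : Euc n →ₗ[ℝ] Euc n))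
    (hdim : ∀ p, Module.finrank ℝ p.1 = n - k + 1 → Module.finrank ℝ p.2 = n - 2 * k + 2 →
      p.2 ≤ p.1 → Module.finrank ℝ (f p) = n - k + 1) :
    IsHaarGrassmannian n (n - k + 1) (Measure.map f μ) := by
  haveI := hμ.1
  haveI : IsProbabilityMeasure (Measure.map f μ) := Measure.isProbabilityMeasure_map hf.aemeasurable
  refine ⟨this, ?_, ?_⟩
  · apply le_antisymm prob_le_one
    calc (1 : ℝ≥0∞) = μ {p : Submodule ℝ (Euc n) × Submodule ℝ (Euc n) |
          Module.finrank ℝ p.1 = n - k + 1 ∧ Module.finrank ℝ p.2 = n - 2 * k + 2 ∧ p.2 ≤ p.1} :=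
          hμ.2.1.symm
      _ ≤ μ (f ⁻¹' {F : Submodule ℝ (Euc n) | Module.finrank ℝ F = n - k + 1}) :=
          measure_mono (fun p hp => hdim p hp.1 hp.2.1 hp.2.2)
      _ ≤ Measure.map f μ {F : Submodule ℝ (Euc n) | Module.finrank ℝ F = n - k + 1} :=
          Measure.le_map_apply hf.aemeasurable _
  · intro g
    rw [Measure.map_map (measurable_mapg g) hf]
    conv_rhs => rw [← hμ.2.2 g]
    rw [Measure.map_map hf (measurable_pairg g)]
    congr 1
    exact funext fun p => (hcomm g p).symm

lemma ball_subset_proj_image {Kb : Set (Euc n)} (hcomp : IsCompact Kb) (hconv : Convex ℝ Kb)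
    (hsymm : ∀ x ∈ Kb, -x ∈ Kb) (h0 : (0 : Euc n) ∈ Kb)
    (hpb : Bornology.IsBounded (polarBody Kb)) (G : Submodule ℝ (Euc n)) {D : ℝ}
    (hD : Metric.diam (polarBody Kb ∩ (G : Set (Euc n))) ≤ D) {y : Euc n} (hyG : y ∈ G)
    (hy : ‖y‖ * D ≤ 1) : y ∈ ⇑(projCLM G) '' Kb := by
  by_contra hnot
  have hSconv : Convex ℝ (⇑(projCLM G) '' Kb) := by
    simpa using hconv.linear_image ((projCLM G) : Euc n →ₗ[ℝ] Euc n)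
  have hSclosed : IsClosed (⇑(projCLM G) '' Kb) :=
    (hcomp.image (projCLM G).continuous).isClosed
  obtain ⟨f, u, hfu, huy⟩ := geometric_hahn_banach_closed_point hSconv hSclosed hnot
  have hu0 : 0 < u := by
    have h00 := hfu 0 ⟨0, h0, map_zero _⟩
    simpa using h00
  set v := (InnerProductSpace.toDual ℝ (Euc n)).symm f with hv
  have hfv : ∀ w : Euc n, (inner ℝ v w : ℝ) = f w := fun w =>
    InnerProductSpace.toDual_symm_apply
  set w := u⁻¹ • projCLM G v with hwdef
  have hwpolar : w ∈ polarBody Kb := by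
    intro x hx
    have habs : |f (projCLM G x)| ≤ u := by
      apply abs_le.2
      constructor
      · have hmx := hfu (projCLM G (-x)) ⟨-x, hsymm x hx, rfl⟩
        rw [_root_.map_neg, _root_.map_neg] at hmx
        linarith
      · exact (hfu (projCLM G x) ⟨x, hx, rfl⟩).le
    have hcalc : (inner ℝ x w : ℝ) = u⁻¹ * f (projCLM G x) := by
      rw [hwdef, real_inner_smul_right]
      congr 1
      rw [← hfv]
      rw [real_inner_comm]
      rw [inner_projCLM]
    rw [hcalc, abs_mul, abs_of_pos (inv_pos.2 hu0)]
    calc u⁻¹ * |f (projCLM G x)| ≤ u⁻¹ * u :=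
          mul_le_mul_of_nonneg_left habs (inv_pos.2 hu0).le
      _ = 1 := inv_mul_cancel₀ hu0.ne'
  have hwG : w ∈ G := G.smul_mem _ (projCLM_mem G v)
  have hwnorm : ‖w‖ ≤ D := by
    have hb : Bornology.IsBounded (polarBody Kb ∩ (G : Set (Euc n))) :=
      hpb.subset Set.inter_subset_left
    have h0m : (0 : Euc n) ∈ polarBody Kb ∩ (G : Set (Euc n)) := by
      refine ⟨fun x _ => by simp, G.zero_mem⟩
    have := Metric.dist_le_diam_of_mem hb ⟨hwpolar, hwG⟩ h0m
    rw [dist_zero_right] at this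
    exact this.trans hD
  have h1 : (1 : ℝ) < inner ℝ w y := by
    have h2 : (inner ℝ v y : ℝ) = f y := hfv y
    have h3 : (inner ℝ (projCLM G v) y : ℝ) = f y := by
      rw [inner_projCLM, projCLM_eq_self hyG, h2]
    have h4 : (inner ℝ w y : ℝ) = u⁻¹ * f y := by
      rw [hwdef, real_inner_smul_left, h3]
    rw [h4]
    rw [show (1 : ℝ) = u⁻¹ * u from (inv_mul_cancel₀ hu0.ne').symm]
    exact mul_lt_mul_of_pos_left huy (inv_pos.2 hu0)
  have h5 : (inner ℝ w y : ℝ) ≤ 1 := by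
    calc (inner ℝ w y : ℝ) ≤ ‖w‖ * ‖y‖ := real_inner_le_norm w y
      _ ≤ D * ‖y‖ := mul_le_mul_of_nonneg_right hwnorm (norm_nonneg y)
      _ = ‖y‖ * D := mul_comm _ _
      _ ≤ 1 := hy
  linarith

lemma proj_image_inter {Kb : Set (Euc n)} {E G : Submodule ℝ (Euc n)} (hEG : E ≤ G) :
    (⇑(projCLM G) '' Kb) ∩ (E : Set (Euc n)) =
      ⇑(projCLM E) '' (Kb ∩ ((E ⊔ Gᗮ : Submodule ℝ (Euc n)) : Set (Euc n))) := by
  ext z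
  constructor
  · rintro ⟨⟨x, hxK, rfl⟩, hzE⟩
    have hxmem : x ∈ (E ⊔ Gᗮ : Submodule ℝ (Euc n)) := by
      rw [Submodule.mem_sup]
      exact ⟨projCLM G x, hzE, x - projCLM G x, sub_projCLM_mem G x, by abel⟩
    refine ⟨x, ⟨hxK, hxmem⟩, ?_⟩
    have hsplit : projCLM E x
        = projCLM E (projCLM G x) + projCLM E (x - projCLM G x) := by
      rw [← map_add]
      congr 1
      abel
    rw [hsplit, projCLM_eq_self hzE,
      projCLM_eq_zero (Submodule.orthogonal_le hEG (sub_projCLM_mem G x)), add_zero]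
  · rintro ⟨x, ⟨hxK, hxm⟩, rfl⟩
    obtain ⟨e, he, ww, hww, rfl⟩ := Submodule.mem_sup.1 hxm
    have h1 : projCLM E (e + ww) = e := by
      rw [map_add, projCLM_eq_self he,
        projCLM_eq_zero (Submodule.orthogonal_le hEG hww), add_zero]
    have h2 : projCLM G (e + ww) = e := by
      rw [map_add, projCLM_eq_self (hEG he), projCLM_eq_zero hww, add_zero]
    exact ⟨⟨e + ww, hxK, by rw [h2, h1]⟩, by rw [h1]; exact he⟩

lemma sup_orthogonal_inner_of_le {E F : Submodule ℝ (Euc n)} (h : E ≤ F) :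
    E ⊔ (E ⊔ Fᗮ : Submodule ℝ (Euc n))ᗮ = F := by
  have h1 : (E ⊔ Fᗮ : Submodule ℝ (Euc n))ᗮ = Eᗮ ⊓ F := by
    rw [← Submodule.inf_orthogonal, Submodule.orthogonal_orthogonal]
  rw [h1]
  apply le_antisymm (sup_le h inf_le_right)
  intro x hx
  rw [Submodule.mem_sup]
  refine ⟨projCLM E x, projCLM_mem E x, x - projCLM E x,
    Submodule.mem_inf.2 ⟨sub_projCLM_mem E x, F.sub_mem hx (h (projCLM_mem E x))⟩, by abel⟩

lemma geomDist_le_of {S : Set (Euc n)} {E : Submodule ℝ (Euc n)} {D : ℝ} (hD : 0 < D)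
    (h1 : ∀ y ∈ ballIn E, D⁻¹ • y ∈ S)
    (h2 : ∀ z ∈ S, z ∈ (E : Set (Euc n)) ∧ ‖z‖ ≤ D) :
    geomDist S (ballIn E) ≤ D * D := by
  apply csInf_le
  · refine ⟨0, fun d hd => ?_⟩
    obtain ⟨a, b, ha, hb, rfl, _, _⟩ := hd
    positivity
  · refine ⟨D, D, hD, hD, rfl, ?_, ?_⟩
    · intro x hx
      obtain ⟨y, hy, rfl⟩ := hx
      exact h1 y hy
    · intro z hz
      obtain ⟨hzE, hznorm⟩ := h2 z hz
      refine ⟨D⁻¹ • z, ⟨E.smul_mem _ hzE, ?_⟩, smul_inv_smul₀ hD.ne' z⟩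
      rw [Metric.mem_closedBall, dist_zero_right, norm_smul, norm_inv, Real.norm_eq_abs,
        abs_of_pos hD]
      calc D⁻¹ * ‖z‖ ≤ D⁻¹ * D := mul_le_mul_of_nonneg_left hznorm (inv_pos.2 hD).le
        _ = 1 := inv_mul_cancel₀ hD.ne'

end Aux
theorem stmt2 :
    ∀ C : ℝ, 0 < C → ∃ C' : ℝ, 0 < C' ∧
      ∀ c : ℝ, 0 < c →
        ∀ n k : ℕ, 1 ≤ k → 2 * k ≤ n →
          ∀ α : ℝ, 1 / 2 < α →
            ∀ (K Kbar : Set (Euc n)), IsSymmConvexBody K →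
              (∃ T : Euc n ≃ₗ[ℝ] Euc n, Kbar = ⇑T '' K) →
              ∀ Pbar : ℝ, 0 < Pbar → Pbar ≤ C / Real.sqrt (α - 1 / 2) →
                PTypicalPosition n α Pbar c Kbar →
                ∀ μ : Measure (Submodule ℝ (Euc n) × Submodule ℝ (Euc n)), IsHaarFlag n k μ →
                  (1 : ℝ≥0∞) - ENNReal.ofReal (2 * Real.exp (-(c * k))) ≤
                    μ {p : Submodule ℝ (Euc n) × Submodule ℝ (Euc n) |
                        geomDist ((⇑(projCLM p.1) '' Kbar) ∩ (p.2 : Set (Euc n))) (ballIn p.2)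
                          ≤ C' * (2 * α - 1)⁻¹ * ((n : ℝ) / k) ^ (2 * α)} ∧
                  (1 : ℝ≥0∞) - ENNReal.ofReal (2 * Real.exp (-(c * k))) ≤
                    μ {p : Submodule ℝ (Euc n) × Submodule ℝ (Euc n) |
                        geomDist (⇑(projCLM p.2) '' (Kbar ∩ (p.1 : Set (Euc n)))) (ballIn p.2)
                          ≤ C' * (2 * α - 1)⁻¹ * ((n : ℝ) / k) ^ (2 * α)} := by
  intro C hC
  refine ⟨2 * C ^ 2, by positivity, ?_⟩
  intro c hc n k hk1 hkn α hα K Kbar hK hTKbar Pbar hP0 hPC hPT μ hμ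
  obtain ⟨T, hKbarT⟩ := hTKbar
  -- basic properties of Kbar
  have hTc : Continuous T := T.toLinearMap.continuous_of_finiteDimensional
  have hKcomp : IsCompact Kbar := by rw [hKbarT]; exact hK.1.image hTc
  have hKconv : Convex ℝ Kbar := by
    rw [hKbarT]
    simpa using hK.2.1.linear_image (T : Euc n →ₗ[ℝ] Euc n)
  have hKsymmSet : ∀ x ∈ Kbar, -x ∈ Kbar := by
    intro x hx
    rw [hKbarT] at hx ⊢
    obtain ⟨y, hy, rfl⟩ := hx
    refine ⟨-y, ?_, by simp⟩
    rw [hK.2.2.2]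
    simpa [Set.mem_neg] using hy
  have h0K : (0 : Euc n) ∈ K := by
    obtain ⟨x, hx⟩ := hK.2.2.1
    have hx' : x ∈ K := interior_subset hx
    have hxm : -x ∈ K := by rw [hK.2.2.2]; simpa [Set.mem_neg] using hx'
    have hcc := hK.2.1 hx' hxm (by norm_num : (0:ℝ) ≤ 1/2) (by norm_num : (0:ℝ) ≤ 1/2)
      (by norm_num : (1:ℝ)/2 + 1/2 = 1)
    simpa [smul_neg] using hcc
  have h0Kbar : (0 : Euc n) ∈ Kbar := by rw [hKbarT]; exact ⟨0, h0K, map_zero T⟩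
  have h0int : (0 : Euc n) ∈ interior Kbar := by
    obtain ⟨x, hx⟩ := hK.2.2.1
    have hnegK : -K = (Homeomorph.neg (Euc n)) ⁻¹' K := rfl
    have hnegintK : -interior K = (Homeomorph.neg (Euc n)) ⁻¹' interior K := rfl
    have hnegint : interior (-K) = -interior K := by
      rw [hnegK, hnegintK, (Homeomorph.neg (Euc n)).preimage_interior]
    have hxm : -x ∈ interior K := by
      rw [hK.2.2.2, hnegint]
      simpa [Set.mem_neg] using hx
    have h0intK : (0 : Euc n) ∈ interior K := by
      have hcc := hK.2.1.interior hx hxm (by norm_num : (0:ℝ) ≤ 1/2)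
        (by norm_num : (0:ℝ) ≤ 1/2) (by norm_num : (1:ℝ)/2 + 1/2 = 1)
      simpa [smul_neg] using hcc
    have hTeq : ⇑(T.toContinuousLinearEquiv.toHomeomorph) = ⇑T := rfl
    have h1 : ⇑T '' interior K ⊆ interior (⇑T '' K) := by
      rw [← hTeq, Homeomorph.image_interior]
    rw [hKbarT]
    exact h1 ⟨0, h0intK, map_zero T⟩
  obtain ⟨r, hr0, hball⟩ : ∃ r : ℝ, 0 < r ∧ Metric.ball (0 : Euc n) r ⊆ Kbar := by
    have hmem := mem_interior_iff_mem_nhds.1 h0int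
    rcases Metric.mem_nhds_iff.1 hmem with ⟨r, hr, hsub⟩
    exact ⟨r, hr, hsub⟩
  have hpolarb : Bornology.IsBounded (polarBody Kbar) := by
    apply Bornology.IsBounded.subset (Metric.isBounded_closedBall (x := (0 : Euc n)) (r := 2 / r))
    intro v hv
    rcases eq_or_ne v 0 with rfl | hne
    · simp [Metric.mem_closedBall]
      positivity
    · have hvn : (0:ℝ) < ‖v‖ := norm_pos_iff.2 hne
      have hx : ((r / 2) / ‖v‖) • v ∈ Kbar := by
        apply hball
        rw [mem_ball_zero_iff, norm_smul, Real.norm_eq_abs, abs_of_pos (by positivity)]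
        rw [div_mul_cancel₀ _ hvn.ne']
        linarith
      have h1 := hv _ hx
      rw [real_inner_smul_left, real_inner_self_eq_norm_sq] at h1
      have h2 : r / 2 / ‖v‖ * ‖v‖ ^ 2 = r / 2 * ‖v‖ := by
        field_simp
      rw [h2, abs_of_nonneg (by positivity)] at h1
      rw [Metric.mem_closedBall, dist_zero_right, le_div_iff₀ hr0]
      nlinarith
  -- numeric bound
  have hn2 : 2 ≤ n := le_trans (by omega) hkn
  have hkpos : (0:ℝ) < (k:ℝ) := by exact_mod_cast hk1
  have hnk : (0:ℝ) < (n:ℝ) / (k:ℝ) := div_pos (by exact_mod_cast (by omega : 0 < n)) hkpos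
  set D : ℝ := Pbar * ((n : ℝ) / (k : ℝ)) ^ α with hDdef
  have hD0 : 0 < D := mul_pos hP0 (Real.rpow_pos_of_pos hnk α)
  have hDD : D * D ≤ 2 * C ^ 2 * (2 * α - 1)⁻¹ * ((n : ℝ) / (k : ℝ)) ^ (2 * α) := by
    have hδ : (0:ℝ) < α - 1/2 := by linarith
    have h1 : D * D = Pbar ^ 2 * ((n:ℝ)/(k:ℝ)) ^ (2 * α) := by
      rw [hDdef, two_mul, Real.rpow_add hnk]
      ring
    have h2 : Pbar ^ 2 ≤ C ^ 2 / (α - 1/2) := by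
      have hm := mul_self_le_mul_self hP0.le hPC
      calc Pbar ^ 2 = Pbar * Pbar := sq Pbar
        _ ≤ (C / Real.sqrt (α - 1/2)) * (C / Real.sqrt (α - 1/2)) := hm
        _ = C ^ 2 / (α - 1/2) := by
            rw [div_mul_div_comm, Real.mul_self_sqrt hδ.le, sq]
    have h3 : C ^ 2 / (α - 1/2) = 2 * C ^ 2 * (2 * α - 1)⁻¹ := by
      have h2a : 2 * α - 1 = 2 * (α - 1/2) := by ring
      rw [h2a, mul_inv, div_eq_mul_inv]
      ring
    calc D * D = Pbar ^ 2 * ((n:ℝ)/(k:ℝ)) ^ (2 * α) := h1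
      _ ≤ (C ^ 2 / (α - 1/2)) * ((n:ℝ)/(k:ℝ)) ^ (2 * α) :=
          mul_le_mul_of_nonneg_right h2 (Real.rpow_nonneg hnk.le _)
      _ = 2 * C ^ 2 * (2 * α - 1)⁻¹ * ((n:ℝ)/(k:ℝ)) ^ (2 * α) := by rw [h3]
  -- flag measure facts
  haveI := hμ.1
  have hμFl : μ {p : Submodule ℝ (Euc n) × Submodule ℝ (Euc n) |
      Module.finrank ℝ p.1 = n - k + 1 ∧ Module.finrank ℝ p.2 = n - 2 * k + 2 ∧ p.2 ≤ p.1} = 1 :=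
    hμ.2.1
  have hσ1 : IsHaarGrassmannian n (n - k + 1) (Measure.map Prod.fst μ) :=
    isHaarGrassmannian_marginal hμ measurable_fst (fun g p => rfl) (fun p h1 _ _ => h1)
  have hσ2 : IsHaarGrassmannian n (n - k + 1)
      (Measure.map (fun p : Submodule ℝ (Euc n) × Submodule ℝ (Euc n) => p.2 ⊔ p.1ᗮ) μ) := by
    apply isHaarGrassmannian_marginal hμ measurable_hmap
    · intro g p
      rw [Submodule.map_sup]
      congr 1
      exact orthogonal_map_isometry g p.1
    · intro p h1 h2 h3
      have hd1 : Module.finrank ℝ p.1 + Module.finrank ℝ p.1ᗮ = n := by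
        have hfr := Submodule.finrank_add_finrank_orthogonal (K := p.1)
        simpa [finrank_euclideanSpace_fin] using hfr
      have hinf : p.2 ⊓ p.1ᗮ = ⊥ := by
        rw [eq_bot_iff]
        intro x hx
        have hx1 : x ∈ p.1 ⊓ p.1ᗮ := ⟨h3 hx.1, hx.2⟩
        rw [Submodule.inf_orthogonal_eq_bot] at hx1
        exact hx1
      have hsum := Submodule.finrank_sup_add_finrank_inf_eq p.2 p.1ᗮ
      rw [hinf] at hsum
      simp only [finrank_bot, add_zero] at hsum
      omega
  have hexp : (0:ℝ) ≤ Real.exp (-(c * k)) := (Real.exp_pos _).le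
  -- common measure-arithmetic helper
  have measure_step : ∀ (bad1 bad2 good : Set (Submodule ℝ (Euc n) × Submodule ℝ (Euc n))),
      μ bad1 ≤ ENNReal.ofReal (Real.exp (-(c * k))) →
      μ bad2 ≤ ENNReal.ofReal (Real.exp (-(c * k))) →
      ({p : Submodule ℝ (Euc n) × Submodule ℝ (Euc n) |
          Module.finrank ℝ p.1 = n - k + 1 ∧ Module.finrank ℝ p.2 = n - 2 * k + 2 ∧ p.2 ≤ p.1}
        \ (bad1 ∪ bad2)) ⊆ good →
      (1 : ℝ≥0∞) - ENNReal.ofReal (2 * Real.exp (-(c * k))) ≤ μ good := by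
    intro bad1 bad2 good hb1 hb2 hincl
    rw [tsub_le_iff_right]
    have hsplit : {p : Submodule ℝ (Euc n) × Submodule ℝ (Euc n) |
        Module.finrank ℝ p.1 = n - k + 1 ∧ Module.finrank ℝ p.2 = n - 2 * k + 2 ∧ p.2 ≤ p.1}
        ⊆ good ∪ (bad1 ∪ bad2) := by
      intro p hp
      by_cases hb : p ∈ bad1 ∪ bad2
      · exact Or.inr hb
      · exact Or.inl (hincl ⟨hp, hb⟩)
    calc (1 : ℝ≥0∞) = μ _ := hμFl.symm
      _ ≤ μ (good ∪ (bad1 ∪ bad2)) := measure_mono hsplit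
      _ ≤ μ good + μ (bad1 ∪ bad2) := measure_union_le _ _
      _ ≤ μ good + (μ bad1 + μ bad2) := by
          exact add_le_add_right (measure_union_le _ _) _
      _ ≤ μ good + (ENNReal.ofReal (Real.exp (-(c * k))) + ENNReal.ofReal (Real.exp (-(c * k)))) := by
          exact add_le_add_right (add_le_add hb1 hb2) _
      _ = μ good + ENNReal.ofReal (2 * Real.exp (-(c * k))) := by
          rw [← ENNReal.ofReal_add hexp hexp, ← two_mul]
  constructor
  · -- statement 1
    apply measure_step
      (Prod.fst ⁻¹' {F : Submodule ℝ (Euc n) |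
        Pbar * ((n : ℝ) / (k : ℝ)) ^ α < Metric.diam (polarBody Kbar ∩ (F : Set (Euc n)))})
      ((fun p : Submodule ℝ (Euc n) × Submodule ℝ (Euc n) => p.2 ⊔ p.1ᗮ) ⁻¹'
        {F : Submodule ℝ (Euc n) |
        Pbar * ((n : ℝ) / (k : ℝ)) ^ α < Metric.diam (Kbar ∩ (F : Set (Euc n)))})
    · exact le_trans (Measure.le_map_apply measurable_fst.aemeasurable _)
        (hPT k hk1 (by omega) _ hσ1 (polarBody Kbar) (Set.mem_insert_of_mem _ rfl))
    · exact le_trans (Measure.le_map_apply measurable_hmap.aemeasurable _)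
        (hPT k hk1 (by omega) _ hσ2 Kbar (Set.mem_insert _ _))
    · rintro ⟨F, E⟩ ⟨hpFl, hpbad⟩
      rw [Set.mem_union] at hpbad
      push_neg at hpbad
      obtain ⟨hnb1, hnb2⟩ := hpbad
      have hEF : E ≤ F := hpFl.2.2
      have hdiam1 : Metric.diam (polarBody Kbar ∩ (F : Set (Euc n))) ≤ D := not_lt.1 hnb1
      have hdiam2 : Metric.diam (Kbar ∩ ((E ⊔ Fᗮ : Submodule ℝ (Euc n)) : Set (Euc n))) ≤ D :=
        not_lt.1 hnb2
      show geomDist ((⇑(projCLM F) '' Kbar) ∩ (E : Set (Euc n))) (ballIn E)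
        ≤ 2 * C ^ 2 * (2 * α - 1)⁻¹ * ((n : ℝ) / k) ^ (2 * α)
      refine le_trans (geomDist_le_of hD0 ?_ ?_) hDD
      · intro y hy
        have hynorm : ‖y‖ ≤ 1 := by
          have := hy.2
          rwa [Metric.mem_closedBall, dist_zero_right] at this
        refine ⟨?_, E.smul_mem _ hy.1⟩
        apply ball_subset_proj_image hKcomp hKconv hKsymmSet h0Kbar hpolarb F hdiam1
          (hEF (E.smul_mem _ hy.1))
        rw [norm_smul, norm_inv, Real.norm_eq_abs, abs_of_pos hD0]
        calc D⁻¹ * ‖y‖ * D = ‖y‖ * (D⁻¹ * D) := by ring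
          _ = ‖y‖ := by rw [inv_mul_cancel₀ hD0.ne', mul_one]
          _ ≤ 1 := hynorm
      · intro z hz
        refine ⟨hz.2, ?_⟩
        have hz' := hz
        rw [proj_image_inter hEF] at hz'
        obtain ⟨x, ⟨hxK, hxH⟩, rfl⟩ := hz'
        calc ‖projCLM E x‖ ≤ ‖x‖ := norm_projCLM_le E x
          _ = dist x 0 := (dist_zero_right x).symm
          _ ≤ Metric.diam (Kbar ∩ ((E ⊔ Fᗮ : Submodule ℝ (Euc n)) : Set (Euc n))) :=
              Metric.dist_le_diam_of_mem (hKcomp.isBounded.subset Set.inter_subset_left)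
                ⟨hxK, hxH⟩ ⟨h0Kbar, Submodule.zero_mem _⟩
          _ ≤ D := hdiam2
  · -- statement 2
    apply measure_step
      (Prod.fst ⁻¹' {F : Submodule ℝ (Euc n) |
        Pbar * ((n : ℝ) / (k : ℝ)) ^ α < Metric.diam (Kbar ∩ (F : Set (Euc n)))})
      ((fun p : Submodule ℝ (Euc n) × Submodule ℝ (Euc n) => p.2 ⊔ p.1ᗮ) ⁻¹'
        {F : Submodule ℝ (Euc n) |
        Pbar * ((n : ℝ) / (k : ℝ)) ^ α < Metric.diam (polarBody Kbar ∩ (F : Set (Euc n)))})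
    · exact le_trans (Measure.le_map_apply measurable_fst.aemeasurable _)
        (hPT k hk1 (by omega) _ hσ1 Kbar (Set.mem_insert _ _))
    · exact le_trans (Measure.le_map_apply measurable_hmap.aemeasurable _)
        (hPT k hk1 (by omega) _ hσ2 (polarBody Kbar) (Set.mem_insert_of_mem _ rfl))
    · rintro ⟨F, E⟩ ⟨hpFl, hpbad⟩
      rw [Set.mem_union] at hpbad
      push_neg at hpbad
      obtain ⟨hnb1, hnb2⟩ := hpbad
      have hEF : E ≤ F := hpFl.2.2
      have hdiam1 : Metric.diam (Kbar ∩ (F : Set (Euc n))) ≤ D := not_lt.1 hnb1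
      have hdiam2 :
          Metric.diam (polarBody Kbar ∩ ((E ⊔ Fᗮ : Submodule ℝ (Euc n)) : Set (Euc n))) ≤ D :=
        not_lt.1 hnb2
      show geomDist (⇑(projCLM E) '' (Kbar ∩ (F : Set (Euc n)))) (ballIn E)
        ≤ 2 * C ^ 2 * (2 * α - 1)⁻¹ * ((n : ℝ) / k) ^ (2 * α)
      refine le_trans (geomDist_le_of hD0 ?_ ?_) hDD
      · intro y hy
        have hynorm : ‖y‖ ≤ 1 := by
          have := hy.2
          rwa [Metric.mem_closedBall, dist_zero_right] at this
        have hEH : E ≤ E ⊔ Fᗮ := le_sup_left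
        have hident := proj_image_inter (Kb := Kbar) (E := E) (G := E ⊔ Fᗮ) hEH
        rw [sup_orthogonal_inner_of_le hEF] at hident
        rw [← hident]
        refine ⟨?_, E.smul_mem _ hy.1⟩
        apply ball_subset_proj_image hKcomp hKconv hKsymmSet h0Kbar hpolarb (E ⊔ Fᗮ) hdiam2
          (hEH (E.smul_mem _ hy.1))
        rw [norm_smul, norm_inv, Real.norm_eq_abs, abs_of_pos hD0]
        calc D⁻¹ * ‖y‖ * D = ‖y‖ * (D⁻¹ * D) := by ring
          _ = ‖y‖ := by rw [inv_mul_cancel₀ hD0.ne', mul_one]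
          _ ≤ 1 := hynorm
      · rintro z ⟨x, ⟨hxK, hxF⟩, rfl⟩
        refine ⟨projCLM_mem E x, ?_⟩
        calc ‖projCLM E x‖ ≤ ‖x‖ := norm_projCLM_le E x
          _ = dist x 0 := (dist_zero_right x).symm
          _ ≤ Metric.diam (Kbar ∩ (F : Set (Euc n))) :=
              Metric.dist_le_diam_of_mem (hKcomp.isBounded.subset Set.inter_subset_left)
                ⟨hxK, hxF⟩ ⟨h0Kbar, Submodule.zero_mem _⟩
          _ ≤ D := hdiam1
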